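/- Every element of H is a continuous function: for each f ∈ H, the function ι f : ℝ≥0 → ℝ is continuous. Moreover, convergence in H implies locally uniform convergence: if (fₙ) is a sequence in H with fₙ → f∞ in the norm of H, then for every x₁ ≥ 0 one has sup_{x ∈ [0,x₁]} |ι fₙ(x) − ι f∞(x)| → 0 as n → ∞. -/

import Mathlib

open scoped NNReal
open Filter Topology

theorem stmt0
    {H : Type*} [NormedAddCommGroup H] [InnerProductSpace ℝ H]
    [CompleteSpace H] [TopologicalSpace.SeparableSpace H]
    (ι : H →ₗ[ℝ] (ℝ≥0 → ℝ)) (hι : Function.Injective ι)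
    (hH1 : Continuous fun f : H => ι f 0)
    (S : ℝ≥0 → H →L[ℝ] H)
    (hshift : ∀ (h : ℝ≥0) (f : H) (x : ℝ≥0), ι (S h f) x = ι f (x + h))
    (hS0 : S 0 = ContinuousLinearMap.id ℝ H)
    (hSadd : ∀ a b : ℝ≥0, S (a + b) = (S a).comp (S b))
    (hScont : ∀ f : H, Continuous fun h : ℝ≥0 => S h f) :
    (∀ f : H, Continuous (ι f)) ∧
    (∀ (fseq : ℕ → H) (flim : H), Tendsto fseq atTop (𝓝 flim) →
      ∀ x₁ : ℝ≥0,
        Tendsto (fun n => ⨆ x : Set.Icc (0 : ℝ≥0) x₁, |ι (fseq n) x.1 - ι flim x.1|)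
          atTop (𝓝 0)) := by
  -- the evaluation at 0 as a continuous linear map
  set e : H →L[ℝ] ℝ := { toLinearMap := (LinearMap.proj (0 : ℝ≥0)).comp ι, cont := hH1 } with he
  have hev : ∀ (f : H) (x : ℝ≥0), ι f x = e (S x f) := by
    intro f x
    have := hshift x f 0
    simp only [zero_add] at this
    simp [he, this.symm]
    rfl
  constructor
  · intro f
    have : ι f = fun x => e (S x f) := funext fun x => hev f x
    rw [this]
    exact e.continuous.comp (hScont f)
  · intro fseq flim hconv x₁
    -- bound on operator norms on [0, x₁]
    obtain ⟨C, hC⟩ : ∃ C, ∀ x : Set.Icc (0 : ℝ≥0) x₁, ‖S x.1‖ ≤ C := by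
      apply banach_steinhaus
      intro f
      have hcomp : IsCompact (Set.Icc (0 : ℝ≥0) x₁) := isCompact_Icc
      have hcont : ContinuousOn (fun x : ℝ≥0 => ‖S x f‖) (Set.Icc 0 x₁) :=
        ((hScont f).norm).continuousOn
      obtain ⟨C, hC⟩ := hcomp.exists_bound_of_continuousOn hcont
      exact ⟨C, fun x => by simpa using hC x.1 x.2⟩
    have hC0 : 0 ≤ C := le_trans (norm_nonneg _) (hC ⟨0, Set.left_mem_Icc.2 zero_le⟩)
    have key : ∀ (n : ℕ) (x : Set.Icc (0 : ℝ≥0) x₁),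
        |ι (fseq n) x.1 - ι flim x.1| ≤ ‖e‖ * C * ‖fseq n - flim‖ := by
      intro n x
      have h1 : ι (fseq n) x.1 - ι flim x.1 = e (S x.1 (fseq n - flim)) := by
        rw [hev (fseq n) x.1, hev flim x.1, map_sub (S x.1), map_sub e]
      rw [h1, ← Real.norm_eq_abs]
      calc ‖e (S x.1 (fseq n - flim))‖ ≤ ‖e‖ * ‖S x.1 (fseq n - flim)‖ := e.le_opNorm _
        _ ≤ ‖e‖ * (‖S x.1‖ * ‖fseq n - flim‖) := by
            exact mul_le_mul_of_nonneg_left ((S x.1).le_opNorm _) (norm_nonneg e)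
        _ ≤ ‖e‖ * (C * ‖fseq n - flim‖) := by
            exact mul_le_mul_of_nonneg_left
              (mul_le_mul_of_nonneg_right (hC x) (norm_nonneg _)) (norm_nonneg e)
        _ = ‖e‖ * C * ‖fseq n - flim‖ := by ring
    have hne : Nonempty (Set.Icc (0 : ℝ≥0) x₁) := ⟨⟨0, Set.left_mem_Icc.2 zero_le⟩⟩
    have hnorm : Tendsto (fun n => ‖fseq n - flim‖) atTop (𝓝 0) :=
      tendsto_iff_norm_sub_tendsto_zero.1 hconv
    have hbound : Tendsto (fun n => ‖e‖ * C * ‖fseq n - flim‖) atTop (𝓝 0) := by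
      simpa using hnorm.const_mul (‖e‖ * C)
    refine squeeze_zero (fun n => Real.iSup_nonneg fun x => abs_nonneg _)
      (fun n => ciSup_le fun x => key n x) hbound
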